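/- Under the hypotheses of the low-gain design (A Schur stable, G_d(1) full column rank, L = G_d(1)^†, ε ∈ (0, ε*)), the estimator x̂(t+1) = A x̂(t) + B u(t) + B_d d̂(t), ŷ(t) = C x̂(t) + D u(t), d̂(t+1) = d̂(t) − εL(ŷ(t) − y(t)) satisfies lim_{t→∞} (d̂(t) − d) = 0 for every constant disturbance d ∈ ℝ^q, every input sequence u, and all initial conditions. -/

import Mathlib

open Filter
open scoped NNReal ENNReal

namespace LowGain

attribute [local instance] Matrix.linftyOpNormedAddCommGroup Matrix.linftyOpNormedRing
  Matrix.linftyOpNormedAlgebra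

noncomputable local instance (n : ℕ) : CompleteSpace (Matrix (Fin n) (Fin n) ℂ) :=
  FiniteDimensional.complete ℂ (Matrix (Fin n) (Fin n) ℂ)

lemma exists_pow_mulVec_bound {n : ℕ} (M : Matrix (Fin n) (Fin n) ℂ)
    (h : ∀ μ ∈ spectrum ℂ M, ‖μ‖ < 1) :
    ∃ r : ℝ, 0 < r ∧ r < 1 ∧ ∃ K : ℕ, 1 ≤ K ∧
      ∀ v : Fin n → ℂ, ‖(M ^ K).mulVec v‖ ≤ r ^ K * ‖v‖ := by
  rcases Nat.eq_zero_or_pos n with hn | hn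
  · subst hn
    refine ⟨1/2, by norm_num, by norm_num, 1, le_refl _, fun v => ?_⟩
    have hmv : (M ^ 1).mulVec v = 0 := Subsingleton.elim _ _
    rw [hmv, norm_zero]
    positivity
  · haveI : Nonempty (Fin n) := Fin.pos_iff_nonempty.mp hn
    haveI : Nontrivial (Matrix (Fin n) (Fin n) ℂ) := Matrix.nonempty
    have hsr : spectralRadius ℂ M < ((1 : ℝ≥0) : ℝ≥0∞) := by
      exact spectrum.spectralRadius_lt_of_forall_lt (a := M) (r := 1)
        (fun z hz => by exact_mod_cast h z hz)
    obtain ⟨r', hr1, hr2⟩ := ENNReal.lt_iff_exists_nnreal_btwn.mp hsr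
    have hr'1 : (r' : ℝ) < 1 := by exact_mod_cast hr2
    have hr'0 : 0 < r' := by
      rcases eq_or_lt_of_le (zero_le : (0 : ℝ≥0) ≤ r') with h0 | h0
      · exfalso; rw [← h0] at hr1; simp at hr1
      · exact h0
    have hG := spectrum.pow_nnnorm_pow_one_div_tendsto_nhds_spectralRadius M
    have hev : ∀ᶠ k : ℕ in atTop, (‖M ^ k‖₊ : ENNReal) ^ (1 / (k:ℝ)) < (r' : ENNReal) :=
      hG.eventually_lt_const hr1
    obtain ⟨K, hK1, hKlt⟩ := ((eventually_ge_atTop 1).and hev).exists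
    have hKpos : (0:ℝ) < (K:ℝ) := by exact_mod_cast hK1
    have hKne : (K:ℝ) ≠ 0 := ne_of_gt hKpos
    have hpow : (‖M ^ K‖₊ : ENNReal) < (r' : ENNReal) ^ (K:ℝ) := by
      have := ENNReal.rpow_lt_rpow hKlt hKpos
      rwa [← ENNReal.rpow_mul, one_div, inv_mul_cancel₀ hKne, ENNReal.rpow_one] at this
    have hpow' : ‖M ^ K‖₊ < r' ^ K := by
      rw [ENNReal.rpow_natCast, ← ENNReal.coe_pow] at hpow
      exact_mod_cast hpow
    have hreal : ‖M ^ K‖ ≤ (r' : ℝ) ^ K := by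
      have : (‖M ^ K‖₊ : ℝ) ≤ ((r' ^ K : NNReal) : ℝ) := by exact_mod_cast le_of_lt hpow'
      simpa using this
    refine ⟨(r' : ℝ), by exact_mod_cast hr'0, hr'1, K, hK1, fun v => ?_⟩
    calc ‖(M ^ K).mulVec v‖ ≤ ‖M ^ K‖ * ‖v‖ := Matrix.linfty_opNorm_mulVec _ _
      _ ≤ (r' : ℝ) ^ K * ‖v‖ := mul_le_mul_of_nonneg_right hreal (norm_nonneg _)

end LowGain

namespace LowGain2

open Filter

/-- Entrywise bound for mulVec in the sup norm. -/
lemma mulVec_norm_le {a b : ℕ} (M : Matrix (Fin a) (Fin b) ℝ) (v : Fin b → ℝ) :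
    ‖M.mulVec v‖ ≤ (∑ i, ∑ j, |M i j|) * ‖v‖ := by
  have hS : (0:ℝ) ≤ ∑ i, ∑ j, |M i j| :=
    Finset.sum_nonneg fun i _ => Finset.sum_nonneg fun j _ => abs_nonneg _
  rw [pi_norm_le_iff_of_nonneg (mul_nonneg hS (norm_nonneg _))]
  intro i
  have h1 : ‖M.mulVec v i‖ ≤ ∑ j, |M i j| * ‖v‖ := by
    calc ‖M.mulVec v i‖ = ‖∑ j, M i j * v j‖ := by
          simp [Matrix.mulVec, dotProduct]
      _ ≤ ∑ j, ‖M i j * v j‖ := norm_sum_le _ _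
      _ ≤ ∑ j, |M i j| * ‖v‖ := by
          refine Finset.sum_le_sum fun j _ => ?_
          rw [norm_mul, Real.norm_eq_abs]
          exact mul_le_mul_of_nonneg_left (norm_le_pi_norm v j) (abs_nonneg _)
  calc ‖M.mulVec v i‖ ≤ ∑ j, |M i j| * ‖v‖ := h1
    _ = (∑ j, |M i j|) * ‖v‖ := by rw [Finset.sum_mul]
    _ ≤ (∑ i, ∑ j, |M i j|) * ‖v‖ := by
        refine mul_le_mul_of_nonneg_right ?_ (norm_nonneg _)
        exact Finset.single_le_sum (f := fun i => ∑ j, |M i j|)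
          (fun i _ => Finset.sum_nonneg fun j _ => abs_nonneg _) (Finset.mem_univ i)

lemma norm_coe_complex {k : ℕ} (v : Fin k → ℝ) : ‖(fun i => (v i : ℂ))‖ = ‖v‖ := by
  rw [Pi.norm_def, Pi.norm_def]
  congr 1
  exact Finset.sup_congr rfl fun i _ => Complex.nnnorm_real (v i)

lemma exists_pow_mulVec_bound_real {n : ℕ} (A : Matrix (Fin n) (Fin n) ℝ)
    (hSchur : ∀ μ ∈ spectrum ℂ (A.map (Complex.ofReal ·)), ‖μ‖ < 1) :
    ∃ r : ℝ, 0 < r ∧ r < 1 ∧ ∃ K : ℕ, 1 ≤ K ∧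
      ∀ v : Fin n → ℝ, ‖(A ^ K).mulVec v‖ ≤ r ^ K * ‖v‖ := by
  obtain ⟨r, hr0, hr1, K, hK, hbound⟩ :=
    LowGain.exists_pow_mulVec_bound (A.map (Complex.ofReal ·)) hSchur
  refine ⟨r, hr0, hr1, K, hK, fun v => ?_⟩
  have hmap : (A.map (Complex.ofReal ·)) ^ K = (A ^ K).map (Complex.ofReal ·) := by
    have h1 : A.map (Complex.ofReal ·) = Complex.ofRealHom.mapMatrix A := rfl
    have h2 : (A ^ K).map (Complex.ofReal ·) = Complex.ofRealHom.mapMatrix (A ^ K) := rfl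
    rw [h1, h2, map_pow]
  have hvec : ((A ^ K).map (Complex.ofReal ·)).mulVec (fun i => ((v i : ℂ)))
      = fun i => (((A ^ K).mulVec v i : ℝ) : ℂ) := by
    funext i
    exact (RingHom.map_mulVec Complex.ofRealHom (A ^ K) v i).symm
  have := hbound (fun i => (v i : ℂ))
  rw [hmap, hvec, norm_coe_complex, norm_coe_complex] at this
  exact this

lemma lyap_tendsto {a b : ℕ → ℝ} {β γ : ℝ} (ha : ∀ t, 0 ≤ a t) (hb : ∀ t, 0 ≤ b t)
    (hβ : 0 ≤ β) (hγ0 : 0 ≤ γ) (hγ1 : γ < 1)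
    (hstep : ∀ t, a (t + 1) + β * b (t + 1) ≤ γ * (a t + β * b t)) :
    Tendsto a atTop (nhds 0) := by
  set V : ℕ → ℝ := fun t => a t + β * b t with hV
  have hVpos : ∀ t, 0 ≤ V t := fun t => add_nonneg (ha t) (mul_nonneg hβ (hb t))
  have hVle : ∀ t, V t ≤ γ ^ t * V 0 := by
    intro t
    induction t with
    | zero => simp
    | succ k ih =>
      calc V (k + 1) ≤ γ * V k := hstep k
        _ ≤ γ * (γ ^ k * V 0) := mul_le_mul_of_nonneg_left ih hγ0
        _ = γ ^ (k + 1) * V 0 := by ring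
  have haV : ∀ t, a t ≤ γ ^ t * V 0 := fun t =>
    le_trans (le_add_of_nonneg_right (mul_nonneg hβ (hb t))) (hVle t)
  have hlim : Tendsto (fun t : ℕ => γ ^ t * V 0) atTop (nhds 0) := by
    have := (tendsto_pow_atTop_nhds_zero_of_lt_one hγ0 hγ1).mul_const (V 0)
    simpa using this
  exact squeeze_zero ha haV hlim

lemma det_one_sub_isUnit {n : ℕ} (A : Matrix (Fin n) (Fin n) ℝ)
    (hSchur : ∀ μ ∈ spectrum ℂ (A.map (Complex.ofReal ·)), ‖μ‖ < 1) :
    IsUnit ((1 : Matrix (Fin n) (Fin n) ℝ) - A).det := by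
  by_contra hdet
  have hdet0 : ((1 : Matrix (Fin n) (Fin n) ℝ) - A).det = 0 := by
    by_contra h0
    exact hdet (isUnit_iff_ne_zero.mpr h0)
  have hmap : (1 : Matrix (Fin n) (Fin n) ℂ) - A.map (Complex.ofReal ·)
      = Complex.ofRealHom.mapMatrix ((1 : Matrix (Fin n) (Fin n) ℝ) - A) := by
    rw [map_sub, map_one]; rfl
  have hdetC : ((1 : Matrix (Fin n) (Fin n) ℂ) - A.map (Complex.ofReal ·)).det = 0 := by
    rw [hmap, ← RingHom.map_det, hdet0]
    simp
  have h1 : (1 : ℂ) ∈ spectrum ℂ (A.map (Complex.ofReal ·)) := by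
    rw [spectrum.mem_iff]
    intro hu
    rw [Matrix.isUnit_iff_isUnit_det] at hu
    rw [show (algebraMap ℂ (Matrix (Fin n) (Fin n) ℂ)) 1 - A.map (Complex.ofReal ·)
        = (1 : Matrix (Fin n) (Fin n) ℂ) - A.map (Complex.ofReal ·) by rw [map_one]] at hu
    rw [hdetC] at hu
    exact (isUnit_iff_ne_zero.mp hu) rfl
  have := hSchur 1 h1
  norm_num at this

lemma gram_isUnit {p q : ℕ} (G : Matrix (Fin p) (Fin q) ℝ) (hrank : G.rank = q) :
    IsUnit (G.transpose * G).det := by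
  rw [← Matrix.isUnit_iff_isUnit_det, ← Matrix.mulVec_surjective_iff_isUnit]
  have hr : (G.transpose * G).rank = q := by rw [Matrix.rank_transpose_mul_self]; exact hrank
  have hrange : LinearMap.range (G.transpose * G).mulVecLin = ⊤ := by
    apply Submodule.eq_top_of_finrank_eq
    rw [← Matrix.rank, hr]
    simp [Module.finrank_pi]
  intro v
  obtain ⟨u, hu⟩ := LinearMap.range_eq_top.mp hrange v
  exact ⟨u, by rw [← Matrix.mulVecLin_apply]; exact hu⟩

end LowGain2

set_option maxHeartbeats 1000000 in
theorem low_gain_estimator_converges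
    {n q m p : ℕ} (A : Matrix (Fin n) (Fin n) ℝ)
    (B : Matrix (Fin n) (Fin m) ℝ) (Bd : Matrix (Fin n) (Fin q) ℝ)
    (C : Matrix (Fin p) (Fin n) ℝ) (D : Matrix (Fin p) (Fin m) ℝ)
    (hSchur : ∀ μ ∈ spectrum ℂ (A.map (Complex.ofReal ·)), ‖μ‖ < 1)
    (G : Matrix (Fin p) (Fin q) ℝ)
    (hG : G = C * ((1 : Matrix (Fin n) (Fin n) ℝ) - A)⁻¹ * Bd)
    (hrank : G.rank = q)
    (L : Matrix (Fin q) (Fin p) ℝ)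
    (hL : L = (G.transpose * G)⁻¹ * G.transpose) :
    ∃ εstar > (0 : ℝ), ∀ ε ∈ Set.Ioo (0 : ℝ) εstar,
      ∀ (d : Fin q → ℝ) (u : ℕ → Fin m → ℝ)
        (x xhat : ℕ → Fin n → ℝ) (dhat : ℕ → Fin q → ℝ)
        (y yhat : ℕ → Fin p → ℝ),
        (∀ t, x (t + 1) = A.mulVec (x t) + B.mulVec (u t) + Bd.mulVec d) →
        (∀ t, y t = C.mulVec (x t) + D.mulVec (u t)) →
        (∀ t, xhat (t + 1) = A.mulVec (xhat t) + B.mulVec (u t) + Bd.mulVec (dhat t)) →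
        (∀ t, yhat t = C.mulVec (xhat t) + D.mulVec (u t)) →
        (∀ t, dhat (t + 1) = dhat t - ε • L.mulVec (yhat t - y t)) →
        Filter.Tendsto (fun t => dhat t - d) Filter.atTop (nhds 0) := by
  classical
  -- spectral decay of A
  obtain ⟨r, hr0, hr1, K, hK1, hAK⟩ := LowGain2.exists_pow_mulVec_bound_real A hSchur
  -- invertibility facts
  have hdet1A : IsUnit ((1 : Matrix (Fin n) (Fin n) ℝ) - A).det :=
    LowGain2.det_one_sub_isUnit A hSchur
  have hGG : IsUnit (G.transpose * G).det := LowGain2.gram_isUnit G hrank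
  have hLG : L * G = 1 := by
    rw [hL, Matrix.mul_assoc]
    exact Matrix.nonsing_inv_mul _ hGG
  set K₀ : Matrix (Fin n) (Fin q) ℝ := ((1 : Matrix (Fin n) (Fin n) ℝ) - A)⁻¹ * Bd with hK₀
  have hIA : ((1 : Matrix (Fin n) (Fin n) ℝ) - A) * ((1 : Matrix (Fin n) (Fin n) ℝ) - A)⁻¹ = 1 :=
    Matrix.mul_nonsing_inv _ hdet1A
  have hKey : A * K₀ = K₀ - Bd := by
    have h1 : ((1 : Matrix (Fin n) (Fin n) ℝ) - A) * K₀ = Bd := by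
      rw [hK₀, ← Matrix.mul_assoc, hIA, Matrix.one_mul]
    have h2 : K₀ - A * K₀ = Bd := by
      rw [← h1]; rw [Matrix.sub_mul, Matrix.one_mul]
    linear_combination (norm := abel) -h2
  have hLCK : (L * C) * K₀ = 1 := by
    rw [Matrix.mul_assoc, hK₀, ← Matrix.mul_assoc C, ← hG, hLG]
  -- the Lyapunov-type norm N
  set s : ℝ := r⁻¹ with hs
  have hs0 : 0 < s := inv_pos.mpr hr0
  set N : (Fin n → ℝ) → ℝ :=
    fun v => ∑ k ∈ Finset.range K, s ^ k * ‖(A ^ k).mulVec v‖ with hNdef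
  have hN0 : ∀ v, 0 ≤ N v := fun v =>
    Finset.sum_nonneg fun k _ => mul_nonneg (pow_nonneg hs0.le _) (norm_nonneg _)
  have hNv : ∀ v, ‖v‖ ≤ N v := by
    intro v
    have h0 : s ^ 0 * ‖(A ^ 0).mulVec v‖ = ‖v‖ := by
      simp [Matrix.one_mulVec]
    rw [← h0]
    exact Finset.single_le_sum
      (f := fun k => s ^ k * ‖(A ^ k).mulVec v‖)
      (fun k _ => mul_nonneg (pow_nonneg hs0.le _) (norm_nonneg _))
      (Finset.mem_range.mpr hK1)
  have hNadd : ∀ v₁ v₂, N (v₁ + v₂) ≤ N v₁ + N v₂ := by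
    intro v₁ v₂
    rw [hNdef]
    simp only
    rw [← Finset.sum_add_distrib]
    refine Finset.sum_le_sum fun k _ => ?_
    rw [Matrix.mulVec_add, ← mul_add]
    exact mul_le_mul_of_nonneg_left (norm_add_le _ _) (pow_nonneg hs0.le _)
  have hNsmul : ∀ (c : ℝ) v, N (c • v) = |c| * N v := by
    intro c v
    rw [hNdef]
    simp only
    rw [Finset.mul_sum]
    refine Finset.sum_congr rfl fun k _ => ?_
    rw [Matrix.mulVec_smul, norm_smul, Real.norm_eq_abs]
    ring
  set CN : ℝ := ∑ k ∈ Finset.range K, s ^ k * (∑ i, ∑ j, |(A ^ k) i j|) with hCN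
  have hCN0 : 0 ≤ CN :=
    Finset.sum_nonneg fun k _ => mul_nonneg (pow_nonneg hs0.le _)
      (Finset.sum_nonneg fun i _ => Finset.sum_nonneg fun j _ => abs_nonneg _)
  have hNle : ∀ v, N v ≤ CN * ‖v‖ := by
    intro v
    rw [hNdef, hCN]
    simp only
    rw [Finset.sum_mul]
    refine Finset.sum_le_sum fun k _ => ?_
    rw [mul_assoc]
    exact mul_le_mul_of_nonneg_left (LowGain2.mulVec_norm_le _ _) (pow_nonneg hs0.le _)
  have hNA : ∀ v, N (A.mulVec v) ≤ r * N v := by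
    intro v
    set f : ℕ → ℝ := fun j => s ^ j * ‖(A ^ j).mulVec v‖ with hf
    have hstep : ∀ k, s ^ k * ‖(A ^ k).mulVec (A.mulVec v)‖ = r * f (k + 1) := by
      intro k
      rw [hf]
      simp only
      rw [Matrix.mulVec_mulVec, ← pow_succ]
      have : r * s ^ (k + 1) = s ^ k := by
        rw [hs, pow_succ]
        field_simp
        try ring
      rw [← mul_assoc, this]
    have h1 : N (A.mulVec v) = r * ∑ k ∈ Finset.range K, f (k + 1) := by
      rw [hNdef]
      simp only
      rw [Finset.mul_sum]
      exact Finset.sum_congr rfl fun k _ => hstep k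
    have h2 : ∑ k ∈ Finset.range K, f (k + 1) = (∑ k ∈ Finset.range K, f k) + f K - f 0 := by
      have := Finset.sum_range_succ' f K
      rw [Finset.sum_range_succ] at this
      linarith
    have hfK : f K ≤ ‖v‖ := by
      rw [hf]
      simp only
      calc s ^ K * ‖(A ^ K).mulVec v‖ ≤ s ^ K * (r ^ K * ‖v‖) :=
            mul_le_mul_of_nonneg_left (hAK v) (pow_nonneg hs0.le _)
        _ = ‖v‖ := by
            rw [hs, ← mul_assoc, ← mul_pow, inv_mul_cancel₀ (ne_of_gt hr0), one_pow, one_mul]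
    have hf0 : f 0 = ‖v‖ := by
      rw [hf]; simp [Matrix.one_mulVec]
    have h3 : ∑ k ∈ Finset.range K, f (k + 1) ≤ N v := by
      rw [h2, hf0]
      have : (∑ k ∈ Finset.range K, f k) = N v := rfl
      linarith
    rw [h1]
    exact mul_le_mul_of_nonneg_left h3 hr0.le
  -- constants
  set c₁ : ℝ := ∑ i, ∑ j, |(L * C) i j| with hc₁
  set c₂ : ℝ := CN * (∑ i, ∑ j, |(K₀ * (L * C)) i j|) with hc₂
  set c₃ : ℝ := CN * (∑ i, ∑ j, |K₀ i j|) with hc₃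
  have habs : ∀ {a b : ℕ} (M : Matrix (Fin a) (Fin b) ℝ), (0:ℝ) ≤ ∑ i, ∑ j, |M i j| :=
    fun M => Finset.sum_nonneg fun i _ => Finset.sum_nonneg fun j _ => abs_nonneg _
  have hc₁0 : 0 ≤ c₁ := habs _
  have hc₂0 : 0 ≤ c₂ := mul_nonneg hCN0 (habs _)
  have hc₃0 : 0 ≤ c₃ := mul_nonneg hCN0 (habs _)
  set β : ℝ := 1 / (2 * (c₃ + 1)) with hβdef
  have hβ0 : 0 < β := by positivity
  have hβc₃ : β * c₃ ≤ 1 / 2 := by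
    rw [hβdef]
    rw [div_mul_eq_mul_div, one_mul, div_le_div_iff₀ (by positivity) (by norm_num)]
    linarith
  set εstar : ℝ := min 1 ((1 - r) * β / (2 * (c₁ + β * c₂ + β))) with hεstar
  have hεstar0 : 0 < εstar := by
    apply lt_min one_pos
    have h1 : 0 < (1 - r) * β := mul_pos (by linarith) hβ0
    have h2 : 0 < 2 * (c₁ + β * c₂ + β) := by
      have h3 : 0 ≤ c₁ + β * c₂ := add_nonneg hc₁0 (mul_nonneg hβ0.le hc₂0)
      linarith
    exact div_pos h1 h2
  refine ⟨εstar, hεstar0, ?_⟩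
  rintro ε ⟨hε0, hεlt⟩ d u x xhat dhat y yhat hx hy hxhat hyhat hdhat
  have hε1 : ε < 1 := lt_of_lt_of_le hεlt (min_le_left _ _)
  have hε2 : ε < (1 - r) * β / (2 * (c₁ + β * c₂ + β)) :=
    lt_of_lt_of_le hεlt (min_le_right _ _)
  -- error signals
  -- error signals (opaque definitions to keep rewriting predictable)
  obtain ⟨e, hedef⟩ : ∃ e' : ℕ → Fin n → ℝ, e' = fun t => xhat t - x t := ⟨_, rfl⟩
  obtain ⟨δ, hδdef⟩ : ∃ δ' : ℕ → Fin q → ℝ, δ' = fun t => dhat t - d := ⟨_, rfl⟩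
  obtain ⟨w, hwdef⟩ : ∃ w' : ℕ → Fin n → ℝ, w' = fun t => e t - K₀.mulVec (δ t) := ⟨_, rfl⟩
  have he_t : ∀ t, e t = xhat t - x t := fun t => congrFun hedef t
  have hδ_t : ∀ t, δ t = dhat t - d := fun t => congrFun hδdef t
  have hw_t : ∀ t, w t = e t - K₀.mulVec (δ t) := fun t => congrFun hwdef t
  have he' : ∀ t, e t = w t + K₀.mulVec (δ t) := by
    intro t; rw [hw_t t]; abel
  have he : ∀ t, e (t + 1) = A.mulVec (e t) + Bd.mulVec (δ t) := by
    intro t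
    rw [he_t (t + 1), hxhat, hx, he_t t, hδ_t t, Matrix.mulVec_sub A, Matrix.mulVec_sub Bd]
    abel
  have hyy : ∀ t, yhat t - y t = C.mulVec (e t) := by
    intro t
    rw [hyhat, hy, he_t t, Matrix.mulVec_sub C]
    abel
  have hδs : ∀ t, δ (t + 1) = (1 - ε) • δ t - ε • (L * C).mulVec (w t) := by
    intro t
    rw [hδ_t (t + 1), hdhat t, hyy t, he' t, Matrix.mulVec_mulVec,
      Matrix.mulVec_add (L * C), Matrix.mulVec_mulVec, hLCK, Matrix.one_mulVec]
    have hd : dhat t = δ t + d := by rw [hδ_t t]; abel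
    rw [smul_add, sub_smul, one_smul, hd]
    abel
  have hws : ∀ t, w (t + 1)
      = A.mulVec (w t) + ε • ((K₀ * (L * C)).mulVec (w t) + K₀.mulVec (δ t)) := by
    intro t
    rw [hw_t (t + 1), he t, hδs t, he' t]
    rw [Matrix.mulVec_add A, Matrix.mulVec_mulVec, hKey, Matrix.sub_mulVec,
      Matrix.mulVec_sub K₀, Matrix.mulVec_smul K₀, Matrix.mulVec_smul K₀, Matrix.mulVec_mulVec,
      sub_smul, one_smul, smul_add]
    abel
  -- scalar estimates
  have key1 : ∀ t, ‖δ (t + 1)‖ ≤ (1 - ε) * ‖δ t‖ + ε * (c₁ * N (w t)) := by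
    intro t
    rw [hδs t]
    calc ‖(1 - ε) • δ t - ε • (L * C).mulVec (w t)‖
        ≤ ‖(1 - ε) • δ t‖ + ‖ε • (L * C).mulVec (w t)‖ := norm_sub_le _ _
      _ = |1 - ε| * ‖δ t‖ + |ε| * ‖(L * C).mulVec (w t)‖ := by
          rw [norm_smul, norm_smul, Real.norm_eq_abs, Real.norm_eq_abs]
      _ ≤ (1 - ε) * ‖δ t‖ + ε * (c₁ * N (w t)) := by
          have h1 : |1 - ε| = 1 - ε := abs_of_nonneg (by linarith)
          have h2 : |ε| = ε := abs_of_nonneg hε0.le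
          rw [h1, h2]
          have h3 : ‖(L * C).mulVec (w t)‖ ≤ c₁ * N (w t) := by
            calc ‖(L * C).mulVec (w t)‖ ≤ c₁ * ‖w t‖ := LowGain2.mulVec_norm_le _ _
              _ ≤ c₁ * N (w t) := mul_le_mul_of_nonneg_left (hNv _) hc₁0
          exact add_le_add (le_refl _) (mul_le_mul_of_nonneg_left h3 hε0.le)
  have key2 : ∀ t, N (w (t + 1)) ≤ (r + ε * c₂) * N (w t) + ε * c₃ * ‖δ t‖ := by
    intro t
    rw [hws t]
    calc N (A.mulVec (w t) + ε • ((K₀ * (L * C)).mulVec (w t) + K₀.mulVec (δ t)))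
        ≤ N (A.mulVec (w t)) + N (ε • ((K₀ * (L * C)).mulVec (w t) + K₀.mulVec (δ t))) :=
          hNadd _ _
      _ = N (A.mulVec (w t)) + |ε| * N ((K₀ * (L * C)).mulVec (w t) + K₀.mulVec (δ t)) := by
          rw [hNsmul]
      _ ≤ r * N (w t) + ε * (N ((K₀ * (L * C)).mulVec (w t)) + N (K₀.mulVec (δ t))) := by
          rw [abs_of_nonneg hε0.le]
          exact add_le_add (hNA _) (mul_le_mul_of_nonneg_left (hNadd _ _) hε0.le)
      _ ≤ (r + ε * c₂) * N (w t) + ε * c₃ * ‖δ t‖ := by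
          have hA1 : N ((K₀ * (L * C)).mulVec (w t)) ≤ c₂ * N (w t) := by
            calc N ((K₀ * (L * C)).mulVec (w t)) ≤ CN * ‖(K₀ * (L * C)).mulVec (w t)‖ :=
                  hNle _
              _ ≤ CN * ((∑ i, ∑ j, |(K₀ * (L * C)) i j|) * ‖w t‖) :=
                  mul_le_mul_of_nonneg_left (LowGain2.mulVec_norm_le _ _) hCN0
              _ = c₂ * ‖w t‖ := by rw [hc₂]; ring
              _ ≤ c₂ * N (w t) := mul_le_mul_of_nonneg_left (hNv _) hc₂0
          have hA2 : N (K₀.mulVec (δ t)) ≤ c₃ * ‖δ t‖ := by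
            calc N (K₀.mulVec (δ t)) ≤ CN * ‖K₀.mulVec (δ t)‖ := hNle _
              _ ≤ CN * ((∑ i, ∑ j, |K₀ i j|) * ‖δ t‖) :=
                  mul_le_mul_of_nonneg_left (LowGain2.mulVec_norm_le _ _) hCN0
              _ = c₃ * ‖δ t‖ := by rw [hc₃]; ring
          nlinarith [hN0 (w t), norm_nonneg (δ t), hε0.le]
  -- Lyapunov assembly
  set γ : ℝ := max (1 - ε / 2) ((1 + r) / 2) with hγdef
  have hγ0 : 0 ≤ γ := le_trans (by linarith) (le_max_right _ _)
  have hγ1 : γ < 1 := max_lt (by linarith) (by linarith)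
  have hcoef1 : 1 - ε + ε * (β * c₃) ≤ γ := by
    have h1 : ε * (β * c₃) ≤ ε * (1 / 2) :=
      mul_le_mul_of_nonneg_left hβc₃ hε0.le
    have : 1 - ε + ε * (β * c₃) ≤ 1 - ε / 2 := by linarith
    exact le_trans this (le_max_left _ _)
  have hcoef2 : β * r + ε * (c₁ + β * c₂) ≤ γ * β := by
    have hden : 0 < 2 * (c₁ + β * c₂ + β) := by
      have h3 : 0 ≤ c₁ + β * c₂ := add_nonneg hc₁0 (mul_nonneg hβ0.le hc₂0)
      linarith
    have h1 : ε * (2 * (c₁ + β * c₂ + β)) < (1 - r) * β :=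
      (lt_div_iff₀ hden).mp hε2
    have h2 : ε * (c₁ + β * c₂) ≤ (1 - r) * β / 2 := by nlinarith [hε0.le, hβ0.le]
    calc β * r + ε * (c₁ + β * c₂) ≤ β * r + (1 - r) * β / 2 := by linarith
      _ = ((1 + r) / 2) * β := by ring
      _ ≤ γ * β := mul_le_mul_of_nonneg_right (le_max_right _ _) hβ0.le
  have hstep : ∀ t, ‖δ (t + 1)‖ + β * N (w (t + 1)) ≤ γ * (‖δ t‖ + β * N (w t)) := by
    intro t
    have k1 := key1 t
    have k2 := key2 t
    have h1 : ‖δ (t + 1)‖ + β * N (w (t + 1))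
        ≤ (1 - ε + ε * (β * c₃)) * ‖δ t‖ + (β * r + ε * (c₁ + β * c₂)) * N (w t) := by
      nlinarith [hβ0.le, norm_nonneg (δ t), hN0 (w t)]
    calc ‖δ (t + 1)‖ + β * N (w (t + 1))
        ≤ (1 - ε + ε * (β * c₃)) * ‖δ t‖ + (β * r + ε * (c₁ + β * c₂)) * N (w t) := h1
      _ ≤ γ * ‖δ t‖ + (γ * β) * N (w t) :=
          add_le_add (mul_le_mul_of_nonneg_right hcoef1 (norm_nonneg _))
            (mul_le_mul_of_nonneg_right hcoef2 (hN0 _))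
      _ = γ * (‖δ t‖ + β * N (w t)) := by ring
  have hfin : Tendsto (fun t => ‖δ t‖) atTop (nhds 0) :=
    LowGain2.lyap_tendsto (a := fun t => ‖δ t‖) (b := fun t => N (w t))
      (fun t => norm_nonneg _) (fun t => hN0 _) hβ0.le hγ0 hγ1 hstep
  rw [← hδdef, tendsto_zero_iff_norm_tendsto_zero]
  exact hfin
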